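/- (Nordhaus–Gaddum lower bound) For every graph G on n vertices, ρ_p(G) + ρ_p(Ḡ) ≥ √n, where Ḡ is the complement of G and ρ_p denotes the induced path partition number. -/

import Mathlib

open SimpleGraph

variable {V : Type*}

/-- A walk is an induced path: it is a path and every adjacency between its
vertices is an edge of the walk. -/
def IsInducedWalk (G : SimpleGraph V) {u v : V} (p : G.Walk u v) : Prop :=
  p.IsPath ∧ ∀ a ∈ p.support, ∀ b ∈ p.support, G.Adj a b → s(a, b) ∈ p.edges

/-- A walk is an isometric (shortest) path between its endpoints. -/
def IsIsometricWalk (G : SimpleGraph V) {u v : V} (p : G.Walk u v) : Prop :=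
  p.IsPath ∧ p.length = G.dist u v

/-- A family of walks is a path cover: each walk is a path and every
vertex lies on at least one of the walks. -/
def IsPathCover (G : SimpleGraph V) {n : ℕ}
    (P : Fin n → Σ u : V, Σ v : V, G.Walk u v) : Prop :=
  (∀ i, (P i).2.2.IsPath) ∧ ∀ x : V, ∃ i, x ∈ (P i).2.2.support

/-- A family of walks is a path partition: each walk is a path and every
vertex lies on exactly one of the walks. -/
def IsPathPartition (G : SimpleGraph V) {n : ℕ}
    (P : Fin n → Σ u : V, Σ v : V, G.Walk u v) : Prop :=
  (∀ i, (P i).2.2.IsPath) ∧ ∀ x : V, ∃! i, x ∈ (P i).2.2.support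

/-- π_c : the path cover number. -/
noncomputable def pathCoverNum (G : SimpleGraph V) : ℕ :=
  sInf {n | ∃ P : Fin n → Σ u : V, Σ v : V, G.Walk u v, IsPathCover G P}

/-- ρ_c : the induced path cover number. -/
noncomputable def inducedPathCoverNum (G : SimpleGraph V) : ℕ :=
  sInf {n | ∃ P : Fin n → Σ u : V, Σ v : V, G.Walk u v,
    IsPathCover G P ∧ ∀ i, IsInducedWalk G (P i).2.2}

/-- ip_c : the isometric path cover number. -/
noncomputable def isometricPathCoverNum (G : SimpleGraph V) : ℕ :=
  sInf {n | ∃ P : Fin n → Σ u : V, Σ v : V, G.Walk u v,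
    IsPathCover G P ∧ ∀ i, IsIsometricWalk G (P i).2.2}

/-- π_p : the path partition number. -/
noncomputable def pathPartitionNum (G : SimpleGraph V) : ℕ :=
  sInf {n | ∃ P : Fin n → Σ u : V, Σ v : V, G.Walk u v, IsPathPartition G P}

/-- ρ_p : the induced path partition number. -/
noncomputable def inducedPathPartitionNum (G : SimpleGraph V) : ℕ :=
  sInf {n | ∃ P : Fin n → Σ u : V, Σ v : V, G.Walk u v,
    IsPathPartition G P ∧ ∀ i, IsInducedWalk G (P i).2.2}

/-- ip_p : the isometric path partition number. -/
noncomputable def isometricPathPartitionNum (G : SimpleGraph V) : ℕ :=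
  sInf {n | ∃ P : Fin n → Σ u : V, Σ v : V, G.Walk u v,
    IsPathPartition G P ∧ ∀ i, IsIsometricWalk G (P i).2.2}


private lemma walk_countP_aux {W : Type*} {G : SimpleGraph W}
    (f : Sym2 W → Bool) (g : W → Bool)
    (hfg : ∀ a b : W, f s(a, b) = (g a && g b)) :
    ∀ {u v : W} (p : G.Walk u v),
      p.edges.countP f + (if g u then 1 else 0) ≤ p.support.countP g := by
  intro u v p
  induction p with
  | nil =>
    rename_i x
    by_cases hu : g x <;> simp [hu, List.countP_cons]
  | @cons u w v h q ih =>
    rw [Walk.edges_cons, Walk.support_cons, List.countP_cons, List.countP_cons]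
    have hw1 : g w = true → 1 ≤ q.support.countP g := by
      intro hgw
      exact List.countP_pos_iff.2 ⟨w, q.start_mem_support, hgw⟩
    by_cases hu : g u <;> by_cases hw : g w <;>
      simp only [hfg, hu, hw, Bool.and_self, Bool.and_true, Bool.and_false,
        Bool.true_and, Bool.false_and, if_true, if_false] at ih ⊢ <;>
      simp at ih ⊢ <;> omega

private lemma walk_countP_lt {W : Type*} {G : SimpleGraph W}
    (f : Sym2 W → Bool) (g : W → Bool)
    (hfg : ∀ a b : W, f s(a, b) = (g a && g b)) :
    ∀ {u v : W} (p : G.Walk u v), (∃ x ∈ p.support, g x) →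
      p.edges.countP f + 1 ≤ p.support.countP g := by
  intro u v p
  induction p with
  | nil =>
    rintro ⟨x, hx, hgx⟩
    simp at hx
    subst hx
    simp [hgx, List.countP_cons]
  | @cons u w v h q ih =>
    rintro ⟨x, hx, hgx⟩
    by_cases hu : g u
    · have := walk_countP_aux f g hfg (Walk.cons h q)
      simpa [hu] using this
    · rw [Walk.edges_cons, Walk.support_cons, List.countP_cons, List.countP_cons]
      have hx' : x ∈ q.support := by
        rcases (List.mem_cons.1 (by simpa using hx)) with rfl | h'
        · exact absurd hgx hu
        · exact h'
      have hf1 : f s(u, w) = false := by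
        rw [hfg]; simp [hu]
      simp only [hf1, hu, if_false]
      have := ih ⟨x, hx', hgx⟩
      omega

private lemma countP_mem_finset {W : Type*} [DecidableEq W] (l : List W) (hl : l.Nodup)
    (M : Finset W) (hM : ∀ x ∈ M, x ∈ l) :
    l.countP (fun x => decide (x ∈ M)) = M.card := by
  rw [List.countP_eq_length_filter, ← List.toFinset_card_of_nodup (hl.filter _)]
  congr 1
  ext x
  simp only [List.mem_toFinset, List.mem_filter, decide_eq_true_eq]
  exact ⟨fun h => h.2, fun h => ⟨hM x h, h⟩⟩

private lemma key_five_false {W : Type*} [DecidableEq W] {G : SimpleGraph W}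
    {u v u' v' : W} {p : G.Walk u v} {q : Gᶜ.Walk u' v'}
    (hp : IsInducedWalk G p) (hq : IsInducedWalk Gᶜ q)
    (M : Finset W) (hM5 : M.card = 5)
    (hMp : ∀ x ∈ M, x ∈ p.support) (hMq : ∀ x ∈ M, x ∈ q.support) : False := by
  set g : W → Bool := fun x => decide (x ∈ M) with hg
  set f : Sym2 W → Bool :=
    fun e => Sym2.lift ⟨fun a b => g a && g b, fun a b => Bool.and_comm _ _⟩ e with hf
  have hfg : ∀ a b : W, f s(a, b) = (g a && g b) := fun a b => rfl
  have hMne : ∃ x ∈ M, True := by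
    have : 0 < M.card := by omega
    obtain ⟨x, hx⟩ := Finset.card_pos.1 this
    exact ⟨x, hx, trivial⟩
  obtain ⟨x0, hx0, -⟩ := hMne
  -- edge counts
  have hpe : p.edges.countP f + 1 ≤ 5 := by
    have := walk_countP_lt f g hfg p ⟨x0, hMp x0 hx0, by simp [hg, hx0]⟩
    rwa [countP_mem_finset p.support hp.1.support_nodup M hMp, hM5] at this
  have hqe : q.edges.countP f + 1 ≤ 5 := by
    have := walk_countP_lt f g hfg q ⟨x0, hMq x0 hx0, by simp [hg, hx0]⟩
    rwa [countP_mem_finset q.support hq.1.support_nodup M hMq, hM5] at this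
  have hEp4 : (p.edges.filter f).toFinset.card ≤ 4 := by
    have h1 := List.toFinset_card_le (p.edges.filter f)
    rw [← List.countP_eq_length_filter] at h1
    omega
  have hEq4 : (q.edges.filter f).toFinset.card ≤ 4 := by
    have h1 := List.toFinset_card_le (q.edges.filter f)
    rw [← List.countP_eq_length_filter] at h1
    omega
  set EpF := (p.edges.filter f).toFinset with hEpF
  set EqF := (q.edges.filter f).toFinset with hEqF
  -- pair counting
  have hmaps : ∀ z ∈ M.offDiag, Sym2.mk z.1 z.2 ∈ EpF ∪ EqF := by
    rintro ⟨a, b⟩ hz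
    rw [Finset.mem_offDiag] at hz
    obtain ⟨ha, hb, hne⟩ := hz
    have hfab : f s(a, b) = true := by
      rw [hfg]; simp [hg, ha, hb]
    by_cases hadj : G.Adj a b
    · have := hp.2 a (hMp a ha) b (hMp b hb) hadj
      exact Finset.mem_union_left _ (List.mem_toFinset.2 (List.mem_filter.2 ⟨this, hfab⟩))
    · have hcadj : Gᶜ.Adj a b := ⟨hne, hadj⟩
      have := hq.2 a (hMq a ha) b (hMq b hb) hcadj
      exact Finset.mem_union_right _ (List.mem_toFinset.2 (List.mem_filter.2 ⟨this, hfab⟩))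
  have hfiber : ∀ e ∈ EpF ∪ EqF,
      (M.offDiag.filter (fun z => Sym2.mk z.1 z.2 = e)).card ≤ 2 := by
    intro e _
    induction e with
    | _ a b =>
      have hsub : M.offDiag.filter (fun z => Sym2.mk z.1 z.2 = s(a, b)) ⊆
          ({(a, b), (b, a)} : Finset (W × W)) := by
        rintro ⟨x, y⟩ hz
        simp only [Finset.mem_filter] at hz
        have h2 := Sym2.eq_iff.1 hz.2
        simp only [Finset.mem_insert, Finset.mem_singleton, Prod.ext_iff]
        tauto
      exact (Finset.card_le_card hsub).trans
        ((Finset.card_insert_le _ _).trans (by simp))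
  have hbig := Finset.card_le_mul_card_image_of_maps_to hmaps 2 hfiber
  have hod : M.offDiag.card = 20 := by rw [Finset.offDiag_card, hM5]
  have huc := Finset.card_union_le EpF EqF
  omega

private lemma key_inter_card {W : Type*} [DecidableEq W] {G : SimpleGraph W}
    {u v u' v' : W} {p : G.Walk u v} {q : Gᶜ.Walk u' v'}
    (hp : IsInducedWalk G p) (hq : IsInducedWalk Gᶜ q) :
    (p.support.toFinset ∩ q.support.toFinset).card ≤ 4 := by
  by_contra h
  push_neg at h
  obtain ⟨M, hMsub, hM5⟩ :=
    Finset.exists_subset_card_eq (h : 5 ≤ (p.support.toFinset ∩ q.support.toFinset).card)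
  exact key_five_false hp hq M hM5
    (fun x hx => List.mem_toFinset.1 (Finset.mem_inter.1 (hMsub hx)).1)
    (fun x hx => List.mem_toFinset.1 (Finset.mem_inter.1 (hMsub hx)).2)

private lemma singleton_partition_mem {W : Type*} [Fintype W] (G : SimpleGraph W) :
    ∃ P : Fin (Fintype.card W) → Σ u : W, Σ v : W, G.Walk u v,
      IsPathPartition G P ∧ ∀ i, IsInducedWalk G (P i).2.2 := by
  classical
  let e := (Fintype.equivFin W).symm
  refine ⟨fun i => ⟨e i, e i, Walk.nil⟩, ⟨fun i => Walk.IsPath.nil, fun x => ?_⟩,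
    fun i => ⟨Walk.IsPath.nil, ?_⟩⟩
  · refine ⟨e.symm x, by simp, fun j hj => ?_⟩
    simp only [Walk.support_nil, List.mem_singleton] at hj
    subst hj
    simp
  · intro a ha b hb hab
    simp only [Walk.support_nil, List.mem_singleton] at ha hb
    subst ha; subst hb
    exact absurd hab (G.irrefl)

theorem stmt_18 {V : Type*} [Fintype V] (G : SimpleGraph V) :
    Real.sqrt (Fintype.card V) ≤
      ((inducedPathPartitionNum G + inducedPathPartitionNum Gᶜ : ℕ) : ℝ) := by
  classical
  set a := inducedPathPartitionNum G with ha
  set b := inducedPathPartitionNum Gᶜ with hb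
  have hGmem : a ∈ {n | ∃ P : Fin n → Σ u : V, Σ v : V, G.Walk u v,
      IsPathPartition G P ∧ ∀ i, IsInducedWalk G (P i).2.2} :=
    Nat.sInf_mem ⟨Fintype.card V, singleton_partition_mem G⟩
  have hCmem : b ∈ {n | ∃ P : Fin n → Σ u : V, Σ v : V, Gᶜ.Walk u v,
      IsPathPartition Gᶜ P ∧ ∀ i, IsInducedWalk Gᶜ (P i).2.2} :=
    Nat.sInf_mem ⟨Fintype.card V, singleton_partition_mem Gᶜ⟩
  obtain ⟨P, hPpart, hPind⟩ := hGmem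
  obtain ⟨Q, hQpart, hQind⟩ := hCmem
  set F : V → Fin a × Fin b :=
    fun x => ((hPpart.2 x).choose, (hQpart.2 x).choose) with hF
  have hcard : Fintype.card V ≤ 4 * (a * b) := by
    have h1 : (Finset.univ : Finset V).card ≤ 4 * (Finset.univ.image F).card := by
      apply Finset.card_le_mul_card_image
      intro c hc
      have hsub : Finset.univ.filter (fun x => F x = c) ⊆
          (P c.1).2.2.support.toFinset ∩ (Q c.2).2.2.support.toFinset := by
        intro x hx
        rw [Finset.mem_filter] at hx
        have hx2 := hx.2
        rw [Finset.mem_inter, List.mem_toFinset, List.mem_toFinset]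
        constructor
        · have := (hPpart.2 x).choose_spec.1
          rw [show c.1 = (hPpart.2 x).choose from by rw [← hx2]]
          exact this
        · have := (hQpart.2 x).choose_spec.1
          rw [show c.2 = (hQpart.2 x).choose from by rw [← hx2]]
          exact this
      exact (Finset.card_le_card hsub).trans (key_inter_card (hPind c.1) (hQind c.2))
    have h2 : (Finset.univ.image F).card ≤ a * b := by
      have := Finset.card_le_univ (Finset.univ.image F)
      simpa using this
    calc Fintype.card V = (Finset.univ : Finset V).card := (Finset.card_univ).symm
      _ ≤ 4 * (Finset.univ.image F).card := h1
      _ ≤ 4 * (a * b) := by omega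
  have hreal : (Fintype.card V : ℝ) ≤ ((a + b : ℕ) : ℝ) ^ 2 := by
    push_cast
    have h4 : (Fintype.card V : ℝ) ≤ 4 * ((a : ℝ) * b) := by exact_mod_cast hcard
    nlinarith [sq_nonneg ((a : ℝ) - (b : ℝ))]
  calc Real.sqrt (Fintype.card V) ≤ Real.sqrt (((a + b : ℕ) : ℝ) ^ 2) :=
        Real.sqrt_le_sqrt hreal
    _ = ((a + b : ℕ) : ℝ) := Real.sqrt_sq (by positivity)
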